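/- For the two-loops quiver over ℂ and every n ≥ 2, the quotient vector space ℂ(Q_n||Q_1)/Im D_{n−1} (which computes the n-th Hochschild cohomology group HH^n(A) of A = ℂQ/⟨Q_2⟩) has dimension 2^{n+1} − 2^{n−1}. -/

import Mathlib

/-! Two-loops quiver base: one vertex `e`, two loops `a`, `b`.

`Q_n` is the set of words of length `n` in `{a, b}` (all paths are parallel, since
there is a single vertex), and `ℂ(Q_n ∥ Q_1)` is the complex vector space with basis
`Q_n ∥ Q_1 = Q_n × Q_1`. -/

namespace TwoLoops

/-- The two arrows (loops) of the quiver. -/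
inductive TL : Type
  | a : TL
  | b : TL
deriving DecidableEq

instance : Fintype TL := ⟨{TL.a, TL.b}, fun x => by cases x <;> simp⟩

/-- Paths of length `n` in the two-loops quiver: words of length `n` in `{a, b}`. -/
abbrev Wd (n : ℕ) : Type := Fin n → TL

/-- `ℂ(Q_n ∥ Q_1)`: the complex vector space with basis `Q_n ∥ Q_1 = Q_n × Q_1`. -/
abbrev CQ1 (n : ℕ) : Type := (Wd n × TL) → ℂ

/-- `ℂ(Q_n ∥ Q_0)`: basis `Q_n ∥ Q_0 = Q_n` (the unique vertex `e` is omitted). -/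
abbrev CQ0 (n : ℕ) : Type := Wd n → ℂ

/-- The basis element `(γ, x)` of `ℂ(Q_n ∥ Q_1)`. -/
noncomputable def bE {n : ℕ} (γ : Wd n) (x : TL) : CQ1 n := Pi.single (γ, x) (1 : ℂ)

/-- The Gerstenhaber-type bracket `[·,·]_Q` on basis elements, for a degree-one
element `(c,x) ∈ Q_1 ∥ Q_1` against `(γ,y) ∈ Q_n ∥ Q_1`:
`[(c,x),(γ,y)]_Q = δ_{c,y}·(γ,x) − Σ_{i=1}^n δ_{γ_i,x}·(γ ⋄_i c, y)`,
which is the general formula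
`Σ_i (−1)^{(i−1)(m−1)} (α,x)∘_i(β,y) − (−1)^{(n−1)(m−1)} Σ_i (−1)^{(i−1)(n−1)} (β,y)∘_i(α,x)`
specialized to the case where the left argument has degree one (all signs are `+1`;
here `γ ⋄_i c` is the path obtained from `γ` by replacing its `i`-th arrow by `c`). -/
noncomputable def brB {n : ℕ} (P : Wd 1 × TL) (R : Wd n × TL) : CQ1 n :=
  (if P.1 0 = R.2 then bE R.1 P.2 else 0)
    - ∑ i : Fin n,
        (if R.1 i = P.2 then bE (Function.update R.1 i (P.1 0)) R.2 else 0)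

/-- The bracket `[f, ·]_Q` with a degree-one element `f ∈ ℂ(Q_1 ∥ Q_1)`, as a linear
endomorphism of `ℂ(Q_n ∥ Q_1)` (bilinear extension of `brB`). -/
noncomputable def brL {n : ℕ} (f : CQ1 1) : CQ1 n →ₗ[ℂ] CQ1 n :=
  ∑ P : Wd 1 × TL, ∑ R : Wd n × TL,
    f P • ((LinearMap.proj R : CQ1 n →ₗ[ℂ] ℂ).smulRight (brB P R))

/-- `H = (b,b) − (a,a)`. -/
noncomputable def H : CQ1 1 := bE (fun _ => TL.b) TL.b - bE (fun _ => TL.a) TL.a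

/-- `E = (a,b)`. -/
noncomputable def E : CQ1 1 := bE (fun _ => TL.a) TL.b

/-- `F = (b,a)`. -/
noncomputable def F : CQ1 1 := bE (fun _ => TL.b) TL.a

/-- `I = (a,a) + (b,b)`. -/
noncomputable def Iel : CQ1 1 := bE (fun _ => TL.a) TL.a + bE (fun _ => TL.b) TL.b

/-- `D_n` on basis elements: `D_n(γ,e) = (aγ,a) + (bγ,b) + (−1)^{n+1}((γa,a) + (γb,b))`. -/
noncomputable def DB (n : ℕ) (γ : Wd n) : CQ1 (n + 1) :=
  bE (Fin.cons TL.a γ) TL.a + bE (Fin.cons TL.b γ) TL.b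
    + ((-1 : ℂ) ^ (n + 1)) • (bE (Fin.snoc γ TL.a) TL.a + bE (Fin.snoc γ TL.b) TL.b)

/-- The linear map `D_n : ℂ(Q_n ∥ Q_0) → ℂ(Q_{n+1} ∥ Q_1)`. -/
noncomputable def Dmap (n : ℕ) : CQ0 n →ₗ[ℂ] CQ1 (n + 1) :=
  ∑ γ : Wd n, (LinearMap.proj γ : CQ0 n →ₗ[ℂ] ℂ).smulRight (DB n γ)

/-- `a(γ)`: the number of occurrences of the arrow `a` in the path `γ`. -/
def ca {n : ℕ} (γ : Wd n) : ℕ := (Finset.univ.filter fun i => γ i = TL.a).card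

/-- `b(γ)`: the number of occurrences of the arrow `b` in the path `γ`. -/
def cb {n : ℕ} (γ : Wd n) : ℕ := (Finset.univ.filter fun i => γ i = TL.b).card

/-- `v(γ) = a(γ) − b(γ)`. -/
def vv {n : ℕ} (γ : Wd n) : ℤ := (ca γ : ℤ) - (cb γ : ℤ)


lemma Dmap_apply (m : ℕ) (c : CQ0 m) (p : Wd (m+1) × TL) :
    Dmap m c p = ∑ γ : Wd m, c γ * DB m γ p := by
  simp [Dmap, LinearMap.sum_apply, Finset.sum_apply]

lemma DB_eval (m : ℕ) (hm : 1 ≤ m) (γ γ' : Wd m) (x : TL)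
    (hx : x ≠ γ ⟨m - 1, by omega⟩) :
    DB m γ' (Fin.cons x γ, x) = if γ' = γ then 1 else 0 := by
  have hlast : (Fin.cons x γ : Wd (m + 1)) (Fin.last m) = γ ⟨m - 1, by omega⟩ := by
    have h : Fin.last m = Fin.succ ⟨m - 1, by omega⟩ := by
      ext; simp; omega
    rw [h, Fin.cons_succ]
  have hsnoc : ∀ δ : Wd m, (Fin.cons x γ : Wd (m+1)) ≠ Fin.snoc δ x := by
    intro δ h
    have h2 := congrFun h (Fin.last m)
    rw [show (Fin.snoc δ x : Wd (m+1)) (Fin.last m) = x from Fin.snoc_last .., hlast] at h2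
    exact hx h2.symm
  simp only [DB, Pi.add_apply, Pi.smul_apply, bE, Pi.single_apply, Prod.mk.injEq,
    smul_eq_mul]
  rcases eq_or_ne γ' γ with rfl | hgg
  · cases x <;> simp_all [Fin.cons_inj]
  · cases x <;> simp_all [Fin.cons_inj, Ne.symm hgg]

lemma Dmap_inj (m : ℕ) (hm : 1 ≤ m) : Function.Injective (Dmap m) := by
  rw [← LinearMap.ker_eq_bot, LinearMap.ker_eq_bot']
  intro c hc
  funext γ
  set x : TL := if γ ⟨m - 1, by omega⟩ = TL.a then TL.b else TL.a with hxdef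
  have hx : x ≠ γ ⟨m - 1, by omega⟩ := by
    rw [hxdef]
    rcases h' : γ ⟨m - 1, by omega⟩ <;> simp [h']
  have h := congrFun hc (Fin.cons x γ, x)
  rw [Dmap_apply] at h
  simp only [DB_eval m hm γ _ x hx, mul_ite, mul_one, mul_zero,
    Finset.sum_ite_eq' Finset.univ γ, Finset.mem_univ, if_true] at h
  exact h

/-- STATEMENT 17: for every `n ≥ 2` (written `n = m+1` with `m ≥ 1`), the quotient
vector space `ℂ(Q_n ∥ Q_1)/Im D_{n−1}` — which computes the Hochschild cohomology group
`HH^n(A)` for `A = ℂQ/⟨Q_2⟩` — has dimension `2^{n+1} − 2^{n−1}`. -/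
theorem stmt17 (m : ℕ) (hm : 1 ≤ m) :
    Module.finrank ℂ (CQ1 (m + 1) ⧸ LinearMap.range (Dmap m))
      = 2 ^ (m + 2) - 2 ^ m := by
  have h1 : Module.finrank ℂ (CQ1 (m + 1)) = 2 ^ (m + 2) := by
    have hTL : Fintype.card TL = 2 := by decide
    rw [Module.finrank_pi, Fintype.card_prod, Fintype.card_fun, hTL, Fintype.card_fin]
    ring
  have h2 : Module.finrank ℂ (CQ0 m) = 2 ^ m := by
    have hTL : Fintype.card TL = 2 := by decide
    rw [Module.finrank_pi, Fintype.card_fun, hTL, Fintype.card_fin]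
  have h3 := LinearMap.finrank_range_of_inj (Dmap_inj m hm)
  have h4 := Submodule.finrank_quotient_add_finrank (LinearMap.range (Dmap m))
  rw [h1, h3, h2] at h4
  omega


end TwoLoops
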